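/- Let x̄, x̂ be unit vectors in ℝⁿ, t ∈ [0,1], x_t = (1−t)x̄ + t x̂, and assume x_t ≠ 0; set x₀ = x_t/|x_t|. Then (1−t)|x̄ − x₀|² + t|x̂ − x₀|² = 2(1 − |x_t|) ≤ 2|x̄ − x̂|². -/

import Mathlib

/-- For unit vectors `x̄, x̂` and the radial projection `x₀` of `x_t = (1−t)x̄ + t x̂` onto the
sphere, `(1−t)|x̄ − x₀|² + t|x̂ − x₀|² = 2(1 − |x_t|) ≤ 2|x̄ − x̂|²`. -/
theorem convex_combination_projection_estimate {n : ℕ}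
    (xbar xhat : EuclideanSpace ℝ (Fin n)) (hxbar : ‖xbar‖ = 1) (hxhat : ‖xhat‖ = 1)
    (t : ℝ) (ht0 : 0 ≤ t) (ht1 : t ≤ 1)
    (hxt : (1 - t) • xbar + t • xhat ≠ 0) :
    (1 - t) * ‖xbar - ‖(1 - t) • xbar + t • xhat‖⁻¹ • ((1 - t) • xbar + t • xhat)‖ ^ 2 +
        t * ‖xhat - ‖(1 - t) • xbar + t • xhat‖⁻¹ • ((1 - t) • xbar + t • xhat)‖ ^ 2 =
      2 * (1 - ‖(1 - t) • xbar + t • xhat‖) ∧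
    2 * (1 - ‖(1 - t) • xbar + t • xhat‖) ≤ 2 * ‖xbar - xhat‖ ^ 2 := by
  set xt := (1 - t) • xbar + t • xhat with hxtdef
  set s := ‖xt‖ with hsdef
  have hs : 0 < s := norm_pos_iff.mpr hxt
  set a := (inner ℝ xbar xhat : ℝ) with ha
  have hbb : (inner ℝ xbar xbar : ℝ) = 1 := by
    rw [real_inner_self_eq_norm_sq, hxbar]; norm_num
  have hhh : (inner ℝ xhat xhat : ℝ) = 1 := by
    rw [real_inner_self_eq_norm_sq, hxhat]; norm_num
  have hsym : (inner ℝ xhat xbar : ℝ) = a := real_inner_comm _ _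
  have ha1 : a ≤ 1 := by
    calc a ≤ ‖xbar‖ * ‖xhat‖ := real_inner_le_norm _ _
    _ = 1 := by rw [hxbar, hxhat]; ring
  have hs2 : s ^ 2 = (1 - t) ^ 2 + t ^ 2 + 2 * t * (1 - t) * a := by
    rw [hsdef, ← real_inner_self_eq_norm_sq, hxtdef]
    simp only [inner_add_add_self, real_inner_smul_left, real_inner_smul_right,
      hbb, hhh, hsym, ha]
    ring
  have hibt : (inner ℝ xbar xt : ℝ) = (1 - t) + t * a := by
    rw [hxtdef]
    simp only [inner_add_right, real_inner_smul_right, hbb, ha]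
    ring
  have hiht : (inner ℝ xhat xt : ℝ) = (1 - t) * a + t := by
    rw [hxtdef]
    simp only [inner_add_right, real_inner_smul_right, hhh, ← hsym, ← ha]
    ring
  have hnorm0 : ‖s⁻¹ • xt‖ = 1 := by
    rw [norm_smul, Real.norm_eq_abs, abs_of_pos (inv_pos.mpr hs), ← hsdef,
      inv_mul_cancel₀ hs.ne']
  have hnb : ‖xbar - s⁻¹ • xt‖ ^ 2 = 2 - 2 * s⁻¹ * ((1 - t) + t * a) := by
    rw [@norm_sub_sq_real, hxbar, hnorm0, real_inner_smul_right, hibt]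
    ring
  have hnh : ‖xhat - s⁻¹ • xt‖ ^ 2 = 2 - 2 * s⁻¹ * ((1 - t) * a + t) := by
    rw [@norm_sub_sq_real, hxhat, hnorm0, real_inner_smul_right, hiht]
    ring
  have hnd : ‖xbar - xhat‖ ^ 2 = 2 - 2 * a := by
    rw [@norm_sub_sq_real, hxbar, hxhat, ← ha]
    ring
  constructor
  · rw [hnb, hnh]
    have h2 : s⁻¹ * s ^ 2 = s := by field_simp [pow_two]
    linear_combination 2 * s⁻¹ * hs2 - 2 * h2
  · rw [hnd]
    nlinarith [hs2, sq_nonneg (1 - s), mul_nonneg ht0 (sub_nonneg.mpr ht1),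
      mul_pos hs hs, sq_nonneg (t - (1 - t))]
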